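/- arXiv:2412.16157 — 2 statements merged into one kernel-verified Lean document; each statement's English description precedes it below -/
import Mathlib

section
/- Let n ≥ 1 be an integer, λ > 0, μ > 0, set ρ = λ/μ, let α ≥ 0 and r₄ ≥ 0 be real numbers, and let y₂ ∈ ℕ. Define g : [0,∞) → ℝ by g(t) = (1 + α e^{nμt})^{y₂} · e^{−ρ α e^{nμt}}. Then g is differentiable on [0,∞) and for every t ≥ 0, g′(t) + n α e^{nμt} e^{−ρα e^{nμt}} · [ λ·(1 + α e^{nμt})^{y₂} − (μ + r₄)·y₂·(1 + α e^{nμt})^{y₂−1} ] = − n α e^{nμt} · r₄ · y₂ · (1 + α e^{nμt})^{y₂−1} · e^{−ρα e^{nμt}} ≤ 0, where y₂ − 1 denotes truncated subtraction in ℕ (the terms carrying the factor y₂ vanish when y₂ = 0). -/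
/-- **Space-time superharmonicity computation for the hitting-time lemma.**
Let `n ≥ 1`, `λ, μ > 0`, `ρ = λ/μ`, `α ≥ 0`, `r₄ ≥ 0` and `y₂ ∈ ℕ`.  With
`g t = (1 + α e^{nμt})^{y₂} e^{−ρ α e^{nμt}}`, the function `g` is differentiable at every
`t ≥ 0` and satisfies
`g′(t) + n α e^{nμt} e^{−ρα e^{nμt}} [λ (1 + α e^{nμt})^{y₂} − (μ + r₄) y₂ (1 + α e^{nμt})^{y₂−1}]`
`= − n α e^{nμt} r₄ y₂ (1 + α e^{nμt})^{y₂−1} e^{−ρα e^{nμt}} ≤ 0`,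
where `y₂ − 1` is truncated subtraction in `ℕ`. -/
theorem superharmonic_hitting_time_computation
    (n : ℕ) (hn : 1 ≤ n) (lam mu α r₄ : ℝ)
    (hlam : 0 < lam) (hmu : 0 < mu) (hα : 0 ≤ α) (hr₄ : 0 ≤ r₄) (y₂ : ℕ) :
    ∀ t : ℝ, 0 ≤ t →
      DifferentiableAt ℝ
        (fun s : ℝ =>
          (1 + α * Real.exp ((n : ℝ) * mu * s)) ^ y₂ *
            Real.exp (-(lam / mu * α * Real.exp ((n : ℝ) * mu * s)))) t ∧
      deriv
          (fun s : ℝ =>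
            (1 + α * Real.exp ((n : ℝ) * mu * s)) ^ y₂ *
              Real.exp (-(lam / mu * α * Real.exp ((n : ℝ) * mu * s)))) t +
        (n : ℝ) * α * Real.exp ((n : ℝ) * mu * t) *
          Real.exp (-(lam / mu * α * Real.exp ((n : ℝ) * mu * t))) *
          (lam * (1 + α * Real.exp ((n : ℝ) * mu * t)) ^ y₂ -
            (mu + r₄) * (y₂ : ℝ) * (1 + α * Real.exp ((n : ℝ) * mu * t)) ^ (y₂ - 1)) =
        -((n : ℝ) * α * Real.exp ((n : ℝ) * mu * t) * r₄ * (y₂ : ℝ) *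
            (1 + α * Real.exp ((n : ℝ) * mu * t)) ^ (y₂ - 1) *
            Real.exp (-(lam / mu * α * Real.exp ((n : ℝ) * mu * t)))) ∧
      -((n : ℝ) * α * Real.exp ((n : ℝ) * mu * t) * r₄ * (y₂ : ℝ) *
          (1 + α * Real.exp ((n : ℝ) * mu * t)) ^ (y₂ - 1) *
          Real.exp (-(lam / mu * α * Real.exp ((n : ℝ) * mu * t)))) ≤ 0 := by
  intro t ht
  have h1 : HasDerivAt (fun s : ℝ => (n : ℝ) * mu * s) ((n : ℝ) * mu) t := by
    simpa using (hasDerivAt_id t).const_mul ((n : ℝ) * mu)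
  have hexp := h1.exp
  set E := Real.exp ((n : ℝ) * mu * t) with hE
  have hbase : HasDerivAt (fun s : ℝ => 1 + α * Real.exp ((n : ℝ) * mu * s))
      (α * (E * ((n : ℝ) * mu))) t := (hexp.const_mul α).const_add 1
  have hpow := hbase.pow y₂
  have hinner : HasDerivAt (fun s : ℝ => -(lam / mu * α * Real.exp ((n : ℝ) * mu * s)))
      (-(lam / mu * α * (E * ((n : ℝ) * mu)))) t := (hexp.const_mul (lam / mu * α)).neg
  have hexp2 := hinner.exp
  have hg := hpow.mul hexp2
  refine ⟨hg.differentiableAt, ?_, ?_⟩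
  · rw [HasDerivAt.deriv (f := fun s : ℝ => (1 + α * Real.exp ((n : ℝ) * mu * s)) ^ y₂ *
        Real.exp (-(lam / mu * α * Real.exp ((n : ℝ) * mu * s)))) hg]
    simp only [Pi.pow_apply, ← hE]
    have hE0 : Real.exp (-(lam / mu * α * E)) = Real.exp (-(lam / mu * α * E)) := rfl
    field_simp
    ring
  · have h0 : 0 ≤ (n : ℝ) * α * E * r₄ * (y₂ : ℝ) * (1 + α * E) ^ (y₂ - 1) *
        Real.exp (-(lam / mu * α * E)) := by
      have hEpos : 0 < E := Real.exp_pos _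
      positivity
    linarith
end

section
/- Let β > 0, μ > 0, ρ > 0 and let k ≥ 1 be a fixed real number. For n ∈ ℕ, n ≥ 1, define φ̄ₙ := (∫₀^∞ u^{β/(nμ)−1} e^{−ρu} du) / (∫₀^∞ (1 + u)^{⌈k√n⌉} u^{β/(nμ)−1} e^{−ρu} du). Then φ̄ₙ → 0 as n → ∞. -/
open MeasureTheory Filter

lemma my_integ1 {ρ : ℝ} (hρ : 0 < ρ) {s : ℝ} (hs : -1 < s) :
    IntegrableOn (fun u : ℝ => u ^ s * Real.exp (-(ρ * u))) (Set.Ioi 0) := by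
  have h := integrableOn_rpow_mul_exp_neg_mul_rpow (p := 1) hs one_pos hρ
  refine h.congr_fun (fun x _ => ?_) measurableSet_Ioi
  simp [Real.rpow_one, neg_mul]

lemma my_pow_bound {x : ℝ} (hx : 0 ≤ x) (N : ℕ) : (1 + x) ^ N ≤ 2 ^ N * (1 + x ^ N) := by
  rcases le_total x 1 with h | h
  · have h1 : (1 + x) ^ N ≤ 2 ^ N := pow_le_pow_left₀ (by linarith) (by linarith) N
    have h2 : (2:ℝ) ^ N ≤ 2 ^ N * (1 + x ^ N) := by
      have : (0:ℝ) ≤ x ^ N := pow_nonneg hx N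
      nlinarith [pow_pos (by norm_num : (0:ℝ) < 2) N]
    linarith
  · have h1 : (1 + x) ^ N ≤ (2 * x) ^ N := pow_le_pow_left₀ (by linarith) (by linarith) N
    have h2 : (2 * x) ^ N = 2 ^ N * x ^ N := mul_pow 2 x N
    have h3 : (0:ℝ) < 2 ^ N := pow_pos (by norm_num) N
    nlinarith [pow_nonneg hx N]

lemma my_integ_den {ρ : ℝ} (hρ : 0 < ρ) {a : ℝ} (ha : 0 < a) (N : ℕ) :
    IntegrableOn (fun u : ℝ => (1 + u) ^ N * u ^ (a - 1) * Real.exp (-(ρ * u))) (Set.Ioi 0) := by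
  have hi1 : IntegrableOn (fun u : ℝ => u ^ (a - 1) * Real.exp (-(ρ * u))) (Set.Ioi 0) :=
    my_integ1 hρ (by linarith)
  have hi2 : IntegrableOn (fun u : ℝ => u ^ ((N : ℝ) + (a - 1)) * Real.exp (-(ρ * u))) (Set.Ioi 0) :=
    my_integ1 hρ (by have := Nat.cast_nonneg (α := ℝ) N; linarith)
  refine Integrable.mono' (((hi1.const_mul ((2:ℝ) ^ N)).add (hi2.const_mul ((2:ℝ) ^ N)))) ?_ ?_
  · apply Measurable.aestronglyMeasurable
    fun_prop
  · filter_upwards [ae_restrict_mem measurableSet_Ioi] with x hx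
    have hx0 : (0:ℝ) < x := hx
    have habs : |(1 + x) ^ N * x ^ (a - 1) * Real.exp (-(ρ * x))| =
        (1 + x) ^ N * x ^ (a - 1) * Real.exp (-(ρ * x)) := by
      apply abs_of_nonneg; positivity
    simp only [Pi.add_apply, Real.norm_eq_abs]
    rw [habs]
    have hb := my_pow_bound hx0.le N
    have key : (1 + x) ^ N * x ^ (a - 1) * Real.exp (-(ρ * x)) ≤
        (2 ^ N * (1 + x ^ N)) * x ^ (a - 1) * Real.exp (-(ρ * x)) := by
      have h1 : (0:ℝ) ≤ x ^ (a - 1) := by positivity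
      have h2 : (0:ℝ) ≤ Real.exp (-(ρ * x)) := (Real.exp_pos _).le
      exact mul_le_mul_of_nonneg_right (mul_le_mul_of_nonneg_right hb h1) h2
    refine key.trans (le_of_eq ?_)
    have hxN : x ^ ((N : ℝ) + (a - 1)) = x ^ N * x ^ (a - 1) := by
      rw [Real.rpow_add hx0, Real.rpow_natCast]
    rw [hxN]
    ring

lemma my_aux_tendsto (k : ℝ) (hk : 1 ≤ k) :
    Filter.Tendsto (fun n : ℕ => ((n : ℝ) + 1) / 3 ^ (⌈k * Real.sqrt (n : ℝ)⌉₊)) atTop (nhds 0) := by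
  have hsq : Filter.Tendsto (fun n : ℕ => Real.sqrt (n : ℝ)) atTop atTop := by
    have h := (tendsto_rpow_atTop (by norm_num : (0:ℝ) < 1/2)).comp
      (tendsto_natCast_atTop_atTop (R := ℝ))
    refine h.congr fun n => ?_
    simp [Real.sqrt_eq_rpow, Function.comp]
  have hlog3 : 0 < Real.log 3 := Real.log_pos (by norm_num)
  have hF : Filter.Tendsto (fun x : ℝ => 4 * (x ^ (2:ℝ) * Real.exp (-(Real.log 3) * x)))
      atTop (nhds 0) := by
    simpa using
      (tendsto_rpow_mul_exp_neg_mul_atTop_nhds_zero 2 (Real.log 3) hlog3).const_mul 4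
  have hcomp := hF.comp hsq
  apply squeeze_zero' (g := fun n : ℕ =>
      4 * (Real.sqrt (n:ℝ) ^ (2:ℝ) * Real.exp (-(Real.log 3) * Real.sqrt (n:ℝ))))
  · filter_upwards with n
    positivity
  · filter_upwards [eventually_ge_atTop 1] with n hn
    have hn1 : (1:ℝ) ≤ (n:ℝ) := by exact_mod_cast hn
    have hs0 : (0:ℝ) ≤ Real.sqrt (n:ℝ) := Real.sqrt_nonneg _
    have hs1 : (1:ℝ) ≤ Real.sqrt (n:ℝ) := by
      rw [show (1:ℝ) = Real.sqrt 1 by simp]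
      exact Real.sqrt_le_sqrt hn1
    set N := ⌈k * Real.sqrt (n:ℝ)⌉₊ with hN
    have hsN : Real.sqrt (n:ℝ) ≤ (N : ℝ) := by
      calc Real.sqrt (n:ℝ) ≤ k * Real.sqrt (n:ℝ) := le_mul_of_one_le_left hs0 hk
        _ ≤ (N : ℝ) := Nat.le_ceil _
    have hexp3 : Real.exp (Real.log 3 * Real.sqrt (n:ℝ)) ≤ (3:ℝ) ^ N := by
      rw [← Real.rpow_natCast 3 N, Real.rpow_def_of_pos (by norm_num : (0:ℝ) < 3)]
      exact Real.exp_le_exp.mpr (mul_le_mul_of_nonneg_left hsN hlog3.le)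
    have hnum : (n:ℝ) + 1 ≤ 4 * Real.sqrt (n:ℝ) ^ (2:ℝ) := by
      have : Real.sqrt (n:ℝ) ^ (2:ℝ) = (n:ℝ) := by
        rw [Real.rpow_two, Real.sq_sqrt (by linarith)]
      rw [this]; linarith
    calc ((n:ℝ) + 1) / 3 ^ N
        ≤ (4 * Real.sqrt (n:ℝ) ^ (2:ℝ)) / Real.exp (Real.log 3 * Real.sqrt (n:ℝ)) :=
          div_le_div₀ (by positivity) hnum (Real.exp_pos _) hexp3
      _ = 4 * (Real.sqrt (n:ℝ) ^ (2:ℝ) * Real.exp (-(Real.log 3) * Real.sqrt (n:ℝ))) := by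
          rw [neg_mul, Real.exp_neg]
          field_simp
  · exact hcomp

/-- **Vanishing of the hitting-time bound along the CLT scaling.**
Let `β > 0`, `μ > 0`, `ρ > 0` and `k ≥ 1` a fixed real number.  For `n ≥ 1`, set
`φ̄ₙ = (∫₀^∞ u^{β/(nμ)−1} e^{−ρu} du) / (∫₀^∞ (1 + u)^{⌈k√n⌉} u^{β/(nμ)−1} e^{−ρu} du)`.
Then `φ̄ₙ → 0` as `n → ∞`. -/
theorem hitting_time_bound_sqrt_scaling_tendsto_zero
    (β mu ρ k : ℝ) (hβ : 0 < β) (hmu : 0 < mu) (hρ : 0 < ρ) (hk : 1 ≤ k) :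
    Tendsto
      (fun n : ℕ =>
        (∫ u in Set.Ioi (0 : ℝ), u ^ (β / ((n : ℝ) * mu) - 1) * Real.exp (-(ρ * u))) /
          (∫ u in Set.Ioi (0 : ℝ),
            (1 + u) ^ (⌈k * Real.sqrt (n : ℝ)⌉₊) * u ^ (β / ((n : ℝ) * mu) - 1) *
              Real.exp (-(ρ * u))))
      atTop (nhds 0) := by
  have hC : (0:ℝ) < (mu / β + 1 / ρ) * (3 * Real.exp (3 * ρ)) := by positivity
  apply squeeze_zero' (g := fun n : ℕ =>
    ((mu / β + 1 / ρ) * (3 * Real.exp (3 * ρ))) *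
      (((n : ℝ) + 1) / 3 ^ (⌈k * Real.sqrt (n : ℝ)⌉₊)))
  · -- eventual nonnegativity
    filter_upwards with n
    apply div_nonneg
    · exact setIntegral_nonneg measurableSet_Ioi fun x hx => by
        have hx0 : (0:ℝ) < x := hx
        positivity
    · exact setIntegral_nonneg measurableSet_Ioi fun x hx => by
        have hx0 : (0:ℝ) < x := hx
        positivity
  · -- eventual bound
    filter_upwards [eventually_ge_atTop (max 1 ⌈β / mu⌉₊)] with n hn
    have hn1 : 1 ≤ n := le_trans (le_max_left _ _) hn
    have hn1R : (1:ℝ) ≤ (n:ℝ) := by exact_mod_cast hn1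
    have hnβ : β / mu ≤ (n:ℝ) := by
      calc β / mu ≤ (⌈β / mu⌉₊ : ℝ) := Nat.le_ceil _
        _ ≤ (n:ℝ) := by exact_mod_cast le_trans (le_max_right _ _) hn
    set a := β / ((n:ℝ) * mu) with haDef
    set N := ⌈k * Real.sqrt (n:ℝ)⌉₊ with hNDef
    have hnmu : (0:ℝ) < (n:ℝ) * mu := by positivity
    have ha : 0 < a := div_pos hβ hnmu
    have ha1 : a ≤ 1 := by
      rw [haDef, div_le_one hnmu]
      calc β = (β / mu) * mu := by field_simp
        _ ≤ (n:ℝ) * mu := mul_le_mul_of_nonneg_right hnβ hmu.le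
    set L := (3:ℝ) ^ N * (3⁻¹ * Real.exp (-(3 * ρ))) with hLDef
    have hL : 0 < L := by positivity
    -- denominator lower bound
    have hden : L ≤ ∫ u in Set.Ioi (0:ℝ),
        (1 + u) ^ N * u ^ (a - 1) * Real.exp (-(ρ * u)) := by
      have hint := my_integ_den hρ ha N
      have step1 : ∫ u in Set.Ioc (2:ℝ) 3,
          (1 + u) ^ N * u ^ (a - 1) * Real.exp (-(ρ * u)) ≤
          ∫ u in Set.Ioi (0:ℝ), (1 + u) ^ N * u ^ (a - 1) * Real.exp (-(ρ * u)) := by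
        refine setIntegral_mono_set hint ?_ ?_
        · filter_upwards [ae_restrict_mem measurableSet_Ioi] with x hx
          have hx0 : (0:ℝ) < x := hx
          positivity
        · refine HasSubset.Subset.eventuallyLE fun x hx => ?_
          exact lt_trans (by norm_num) hx.1
      have step2 : L ≤ ∫ u in Set.Ioc (2:ℝ) 3,
          (1 + u) ^ N * u ^ (a - 1) * Real.exp (-(ρ * u)) := by
        have hvol : (volume (Set.Ioc (2:ℝ) 3)).toReal = 1 := by
          simp [Real.volume_Ioc]
          norm_num
        have hconst : ∫ _ in Set.Ioc (2:ℝ) 3, L = L := by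
          rw [setIntegral_const]
          show (volume (Set.Ioc (2:ℝ) 3)).toReal • L = L
          rw [hvol, one_smul]
        rw [← hconst]
        refine setIntegral_mono_on
          (integrableOn_const (by rw [Real.volume_Ioc]; exact ENNReal.ofReal_ne_top))
          (hint.mono_set fun x hx => lt_trans (by norm_num) hx.1)
          measurableSet_Ioc fun x hx => ?_
        have hx2 : (2:ℝ) < x := hx.1
        have hx3 : x ≤ 3 := hx.2
        have hx0 : (0:ℝ) < x := by linarith
        have e1 : (3:ℝ) ^ N ≤ (1 + x) ^ N :=
          pow_le_pow_left₀ (by norm_num) (by linarith) N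
        have e2 : (3:ℝ)⁻¹ ≤ x ^ (a - 1) := by
          calc (3:ℝ)⁻¹ = (3:ℝ) ^ (-1:ℝ) := by
                rw [Real.rpow_neg_one]
            _ ≤ (3:ℝ) ^ (a - 1) :=
                Real.rpow_le_rpow_of_exponent_le (by norm_num) (by linarith)
            _ ≤ x ^ (a - 1) :=
                Real.rpow_le_rpow_of_nonpos hx0 hx3 (by linarith)
        have e3 : Real.exp (-(3 * ρ)) ≤ Real.exp (-(ρ * x)) := by
          apply Real.exp_le_exp.mpr
          nlinarith
        calc L = (3:ℝ) ^ N * 3⁻¹ * Real.exp (-(3 * ρ)) := by rw [hLDef]; ring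
          _ ≤ (1 + x) ^ N * x ^ (a - 1) * Real.exp (-(ρ * x)) := by
              apply mul_le_mul _ e3 (Real.exp_pos _).le (by positivity)
              apply mul_le_mul e1 e2 (by norm_num) (by positivity)
      exact le_trans step2 step1
    -- numerator upper bound
    have hnum : (∫ u in Set.Ioi (0:ℝ), u ^ (a - 1) * Real.exp (-(ρ * u))) ≤
        (n:ℝ) * mu / β + 1 / ρ := by
      have hi : IntegrableOn (fun u : ℝ => u ^ (a - 1) * Real.exp (-(ρ * u))) (Set.Ioi 0) :=
        my_integ1 hρ (by linarith)
      have hsplit : (∫ u in Set.Ioi (0:ℝ), u ^ (a - 1) * Real.exp (-(ρ * u))) =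
          (∫ u in Set.Ioc (0:ℝ) 1, u ^ (a - 1) * Real.exp (-(ρ * u))) +
          ∫ u in Set.Ioi (1:ℝ), u ^ (a - 1) * Real.exp (-(ρ * u)) := by
        rw [← setIntegral_union (Set.Ioc_disjoint_Ioi le_rfl) measurableSet_Ioi
          (hi.mono_set Set.Ioc_subset_Ioi_self)
          (hi.mono_set fun x hx => show (0:ℝ) < x from lt_trans one_pos hx),
          Set.Ioc_union_Ioi_eq_Ioi zero_le_one]
      have hpart1 : (∫ u in Set.Ioc (0:ℝ) 1, u ^ (a - 1) * Real.exp (-(ρ * u))) ≤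
          (n:ℝ) * mu / β := by
        have hrint : IntegrableOn (fun u : ℝ => u ^ (a - 1)) (Set.Ioc (0:ℝ) 1) := by
          have := intervalIntegral.intervalIntegrable_rpow' (a := 0) (b := 1) (by linarith : (-1:ℝ) < a - 1)
          exact this.1
        have hle : (∫ u in Set.Ioc (0:ℝ) 1, u ^ (a - 1) * Real.exp (-(ρ * u))) ≤
            ∫ u in Set.Ioc (0:ℝ) 1, u ^ (a - 1) := by
          refine setIntegral_mono_on (hi.mono_set Set.Ioc_subset_Ioi_self) hrint
            measurableSet_Ioc fun x hx => ?_
          have hx0 : (0:ℝ) < x := hx.1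
          have : Real.exp (-(ρ * x)) ≤ 1 := by
            rw [Real.exp_le_one_iff]
            nlinarith
          calc x ^ (a - 1) * Real.exp (-(ρ * x)) ≤ x ^ (a - 1) * 1 :=
                mul_le_mul_of_nonneg_left this (by positivity)
            _ = x ^ (a - 1) := mul_one _
        have hval : (∫ u in Set.Ioc (0:ℝ) 1, u ^ (a - 1)) = 1 / a := by
          rw [← intervalIntegral.integral_of_le zero_le_one,
            integral_rpow (Or.inl (by linarith : (-1:ℝ) < a - 1))]
          rw [sub_add_cancel]
          rw [Real.one_rpow, Real.zero_rpow (ne_of_gt ha)]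
          ring
        have heq : (1:ℝ) / a = (n:ℝ) * mu / β := by
          rw [haDef, one_div_div]
        exact hle.trans (le_of_eq (hval.trans heq))
      have hpart2 : (∫ u in Set.Ioi (1:ℝ), u ^ (a - 1) * Real.exp (-(ρ * u))) ≤ 1 / ρ := by
        have hexpint : IntegrableOn (fun u : ℝ => u ^ ((1:ℝ) - 1) * Real.exp (-(ρ * u)))
            (Set.Ioi 0) := my_integ1 hρ (by norm_num)
        have hle1 : (∫ u in Set.Ioi (1:ℝ), u ^ (a - 1) * Real.exp (-(ρ * u))) ≤
            ∫ u in Set.Ioi (1:ℝ), u ^ ((1:ℝ) - 1) * Real.exp (-(ρ * u)) := by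
          refine setIntegral_mono_on (hi.mono_set fun x hx => show (0:ℝ) < x from lt_trans one_pos hx)
            (hexpint.mono_set fun x hx => show (0:ℝ) < x from lt_trans one_pos hx)
            measurableSet_Ioi fun x hx => ?_
          have hx1 : (1:ℝ) ≤ x := le_of_lt hx
          have : x ^ (a - 1) ≤ 1 := Real.rpow_le_one_of_one_le_of_nonpos hx1 (by linarith)
          have h0 : x ^ ((1:ℝ) - 1) = 1 := by
            rw [sub_self, Real.rpow_zero]
          rw [h0, one_mul]
          calc x ^ (a - 1) * Real.exp (-(ρ * x)) ≤ 1 * Real.exp (-(ρ * x)) :=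
              mul_le_mul_of_nonneg_right this (Real.exp_pos _).le
            _ = Real.exp (-(ρ * x)) := one_mul _
        have hle2 : (∫ u in Set.Ioi (1:ℝ), u ^ ((1:ℝ) - 1) * Real.exp (-(ρ * u))) ≤
            ∫ u in Set.Ioi (0:ℝ), u ^ ((1:ℝ) - 1) * Real.exp (-(ρ * u)) := by
          refine setIntegral_mono_set hexpint ?_ ?_
          · filter_upwards [ae_restrict_mem measurableSet_Ioi] with x hx
            have hx0 : (0:ℝ) < x := hx
            positivity
          · exact HasSubset.Subset.eventuallyLE fun x hx => show (0:ℝ) < x from lt_trans one_pos hx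
        have hval : (∫ u in Set.Ioi (0:ℝ), u ^ ((1:ℝ) - 1) * Real.exp (-(ρ * u))) = 1 / ρ := by
          rw [Real.integral_rpow_mul_exp_neg_mul_Ioi one_pos hρ]
          simp [Real.Gamma_one, Real.rpow_one]
        exact le_trans (hle1.trans hle2) (le_of_eq hval)
      rw [hsplit]; exact add_le_add hpart1 hpart2
    -- combine
    have hnum0 : 0 ≤ ∫ u in Set.Ioi (0:ℝ), u ^ (a - 1) * Real.exp (-(ρ * u)) :=
      setIntegral_nonneg measurableSet_Ioi fun x hx => by
        have hx0 : (0:ℝ) < x := hx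
        positivity
    have hU0 : (0:ℝ) ≤ (n:ℝ) * mu / β + 1 / ρ := by positivity
    have h1 : (∫ u in Set.Ioi (0:ℝ), u ^ (a - 1) * Real.exp (-(ρ * u))) /
        (∫ u in Set.Ioi (0:ℝ), (1 + u) ^ N * u ^ (a - 1) * Real.exp (-(ρ * u))) ≤
        ((n:ℝ) * mu / β + 1 / ρ) / L := div_le_div₀ hU0 hnum hL hden
    have h2 : ((n:ℝ) * mu / β + 1 / ρ) / L ≤
        ((mu / β + 1 / ρ) * (3 * Real.exp (3 * ρ))) * (((n:ℝ) + 1) / 3 ^ N) := by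
      rw [div_le_iff₀ hL]
      have hgL : ((mu / β + 1 / ρ) * (3 * Real.exp (3 * ρ))) * (((n:ℝ) + 1) / 3 ^ N) * L =
          (mu / β + 1 / ρ) * ((n:ℝ) + 1) := by
        rw [hLDef, Real.exp_neg]
        have h3N : ((3:ℝ) ^ N) ≠ 0 := by positivity
        have hexp : Real.exp (3 * ρ) ≠ 0 := (Real.exp_pos _).ne'
        field_simp
      rw [hgL]
      have e1 : (0:ℝ) ≤ mu / β := by positivity
      have e2 : (0:ℝ) ≤ 1 / ρ := by positivity
      have e3 : (0:ℝ) ≤ (n:ℝ) := by positivity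
      calc (n:ℝ) * mu / β + 1 / ρ = (mu / β) * (n:ℝ) + (1 / ρ) := by ring
        _ ≤ (mu / β) * ((n:ℝ) + 1) + (1 / ρ) * ((n:ℝ) + 1) := by nlinarith
        _ = (mu / β + 1 / ρ) * ((n:ℝ) + 1) := by ring
    exact le_trans h1 h2
  · simpa using (my_aux_tendsto k hk).const_mul ((mu / β + 1 / ρ) * (3 * Real.exp (3 * ρ)))
end
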